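/- Proposition 1, case (i): if a/b > H, then U attains a strict global maximum at sH, i.e., for every real s with s ≠ sH one has U(s) < U(sH). -/

import Mathlib

noncomputable def Ubar (a b T Wi Wj Di Dj s : ℝ) : ℝ :=
  a * (Wi + s * T)
    - b * (((Wi - Wj + 2 * s * T - T) / 2) ^ 2 + ((Di - Dj + 2 * s * T - T) / 2) ^ 2)

noncomputable def Uhat (a b T eta Wi Wj Di Dj s : ℝ) : ℝ :=
  Ubar a b T Wi Wj Di Dj s + a * eta * (Di + s * T)

noncomputable def Udict (a b T eta Wi Wj Di Dj s : ℝ) : ℝ :=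
  if Di + s * T < 0 then Uhat a b T eta Wi Wj Di Dj s else Ubar a b T Wi Wj Di Dj s

theorem stmt4 (a b T eta Wi Wj Di Dj : ℝ)
    (ha : 0 < a) (hb : 0 < b) (hT : 0 < T) (heta0 : 0 ≤ eta) (heta1 : eta < 1)
    (hcase : a / b > Wi - Wj - 2 * T - 3 * Di - Dj) :
    ∀ s : ℝ, s ≠ (a / b * (1 / (4 * T)) + 1 / 2 + (Wj - Wi) / (4 * T) + (Dj - Di) / (4 * T)) →
      Udict a b T eta Wi Wj Di Dj s < Udict a b T eta Wi Wj Di Dj (a / b * (1 / (4 * T)) + 1 / 2 + (Wj - Wi) / (4 * T) + (Dj - Di) / (4 * T)) := by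
  intro s hs
  set c := a / b with hc
  have hac : a = c * b := by rw [hc, div_mul_cancel₀ a (ne_of_gt hb)]
  set sH : ℝ := c * (1 / (4 * T)) + 1 / 2 + (Wj - Wi) / (4 * T) + (Dj - Di) / (4 * T) with hsH
  have hT' : T ≠ 0 := ne_of_gt hT
  have hsHT : sH * T = c / 4 + T / 2 + (Wj - Wi) / 4 + (Dj - Di) / 4 := by
    rw [hsH]; field_simp
  have hcb : c > Wi - Wj - 2 * T - 3 * Di - Dj := hcase
  have hpos : ¬ (Di + sH * T < 0) := by
    rw [hsHT]; push_neg; nlinarith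
  have hne : s * T - sH * T ≠ 0 := by
    rw [← sub_mul]; exact mul_ne_zero (sub_ne_zero.mpr hs) hT'
  have hquad : Ubar a b T Wi Wj Di Dj s < Ubar a b T Wi Wj Di Dj sH := by
    have h1 : Ubar a b T Wi Wj Di Dj sH - Ubar a b T Wi Wj Di Dj s
        = 2 * b * (s * T - sH * T) ^ 2 := by
      simp only [Ubar, hsH, hac]; field_simp; ring
    have h2 : 0 < 2 * b * (s * T - sH * T) ^ 2 := by positivity
    linarith
  simp only [Udict, if_neg hpos]
  by_cases h : Di + s * T < 0
  · rw [if_pos h]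
    have : a * eta * (Di + s * T) ≤ 0 :=
      mul_nonpos_of_nonneg_of_nonpos (by positivity) (le_of_lt h)
    simp only [Uhat]
    linarith
  · rw [if_neg h]; exact hquad
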